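/- Let r_1 be the complex Lie algebra on ℂ³ with brackets [e₁,e₃]=e₁, [e₂,e₃]=e₂ (all other basis brackets zero). Then the space of derivations of r_1 has dimension 6, H²(r_1; r_1) has dimension 3, and H³(r_1; r_1) = 0. -/

import Mathlib

noncomputable section

/-- The underlying vector space `ℂ³`. -/
abbrev E3 : Type := Fin 3 → ℂ

/-- The standard basis vectors of `ℂ³`. -/
def e1 : E3 := ![1, 0, 0]
def e2 : E3 := ![0, 1, 0]
def e3 : E3 := ![0, 0, 1]

/-- The unique antisymmetric bilinear bracket on `ℂ³` with `[e₁,e₂] = c12`,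
`[e₁,e₃] = c13`, `[e₂,e₃] = c23`. -/
def br (c12 c13 c23 : E3) (u v : E3) : E3 :=
  (u 0 * v 1 - u 1 * v 0) • c12 + (u 0 * v 2 - u 2 * v 0) • c13 +
    (u 1 * v 2 - u 2 * v 1) • c23

/-- The Jacobi identity for a bracket. -/
def Jacobi (b : E3 → E3 → E3) : Prop :=
  ∀ u v w : E3, b (b u v) w + b (b v w) u + b (b w u) v = 0

/-- `f : ℂ³ → ℂ³` is ℂ-linear. -/
def IsLin (f : E3 → E3) : Prop :=
  ∀ (a : ℂ) (x y : E3), f (a • x + y) = a • f x + f y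

/-- `φ : ℂ³ × ℂ³ → ℂ³` is ℂ-bilinear. -/
def IsBil (φ : E3 → E3 → E3) : Prop :=
  (∀ (a : ℂ) (x x' y : E3), φ (a • x + x') y = a • φ x y + φ x' y) ∧
  (∀ (a : ℂ) (x y y' : E3), φ x (a • y + y') = a • φ x y + φ x y')

/-- `φ` is alternating (as a 2-cochain). -/
def IsAlt2 (φ : E3 → E3 → E3) : Prop := ∀ x : E3, φ x x = 0

/-- `ψ : (ℂ³)³ → ℂ³` is ℂ-trilinear. -/
def IsTril (ψ : E3 → E3 → E3 → E3) : Prop :=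
  (∀ (a : ℂ) (x x' y z : E3), ψ (a • x + x') y z = a • ψ x y z + ψ x' y z) ∧
  (∀ (a : ℂ) (x y y' z : E3), ψ x (a • y + y') z = a • ψ x y z + ψ x y' z) ∧
  (∀ (a : ℂ) (x y z z' : E3), ψ x y (a • z + z') = a • ψ x y z + ψ x y z')

/-- `ψ` is alternating (as a 3-cochain): it vanishes whenever two arguments coincide. -/
def IsAlt3 (ψ : E3 → E3 → E3 → E3) : Prop :=
  ∀ x y : E3, ψ x x y = 0 ∧ ψ x y y = 0 ∧ ψ x y x = 0

/-- The coboundary of a 1-cochain `f`, with respect to the bracket `b`: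
`(δf)(x,y) = [x, f y] − [y, f x] − f [x,y]`. -/
def cb1 (b : E3 → E3 → E3) (f : E3 → E3) : E3 → E3 → E3 :=
  fun x y => b x (f y) - b y (f x) - f (b x y)

/-- The coboundary of a 2-cochain `φ`, with respect to the bracket `b`:
`(δφ)(x,y,z) = [x, φ(y,z)] − [y, φ(x,z)] + [z, φ(x,y)] − φ([x,y],z) + φ([x,z],y) − φ([y,z],x)`. -/
def cb2 (b : E3 → E3 → E3) (φ : E3 → E3 → E3) : E3 → E3 → E3 → E3 :=
  fun x y z =>
    b x (φ y z) - b y (φ x z) + b z (φ x y) - φ (b x y) z + φ (b x z) y - φ (b y z) x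

/-- `f` is a derivation of the bracket `b`. -/
def IsDeriv (b : E3 → E3 → E3) (f : E3 → E3) : Prop :=
  IsLin f ∧ ∀ x y : E3, f (b x y) = b (f x) y + b x (f y)

/-- The space of derivations of the bracket `b`.  (The set of derivations is already a
ℂ-subspace, so taking its span does not change it.) -/
def DerSpace (b : E3 → E3 → E3) : Submodule ℂ (E3 → E3) :=
  Submodule.span ℂ {f : E3 → E3 | IsDeriv b f}

/-- The space of 2-cocycles with adjoint coefficients. -/
def Z2 (b : E3 → E3 → E3) : Submodule ℂ (E3 → E3 → E3) :=
  Submodule.span ℂ {φ : E3 → E3 → E3 | IsBil φ ∧ IsAlt2 φ ∧ cb2 b φ = 0}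

/-- The space of 2-coboundaries with adjoint coefficients. -/
def B2 (b : E3 → E3 → E3) : Submodule ℂ (E3 → E3 → E3) :=
  Submodule.span ℂ {φ : E3 → E3 → E3 | ∃ f : E3 → E3, IsLin f ∧ φ = cb1 b f}

/-- The space of all 3-cochains (alternating trilinear maps); every 3-cochain is a
3-cocycle since `dim = 3`. -/
def C3 : Submodule ℂ (E3 → E3 → E3 → E3) :=
  Submodule.span ℂ {ψ : E3 → E3 → E3 → E3 | IsTril ψ ∧ IsAlt3 ψ}

/-- The space of 3-coboundaries with adjoint coefficients. -/
def B3 (b : E3 → E3 → E3) : Submodule ℂ (E3 → E3 → E3 → E3) :=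
  Submodule.span ℂ
    {ψ : E3 → E3 → E3 → E3 | ∃ φ : E3 → E3 → E3, IsBil φ ∧ IsAlt2 φ ∧ ψ = cb2 b φ}

/-- The dimension of `H²(L;L)`: cocycles modulo coboundaries. -/
def H2dim (b : E3 → E3 → E3) : ℕ :=
  Module.finrank ℂ (Z2 b ⧸ (B2 b).comap (Z2 b).subtype)

/-- The dimension of `H³(L;L)`: 3-cochains modulo coboundaries of 2-cochains. -/
def H3dim (b : E3 → E3 → E3) : ℕ :=
  Module.finrank ℂ (C3 ⧸ (B3 b).comap C3.subtype)

namespace RoneAux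

abbrev b0 : E3 → E3 → E3 := br 0 e1 e2

lemma b_apply (x y : E3) : b0 x y = ![x 0 * y 2 - x 2 * y 0, x 1 * y 2 - x 2 * y 1, 0] := by
  funext i
  fin_cases i <;> simp [br, e1, e2, e3] <;> ring

lemma lin_zero {f : E3 → E3} (hf : IsLin f) : f 0 = 0 := by
  have h := hf 1 0 0
  simpa using h

lemma lin_expand {f : E3 → E3} (hf : IsLin f) (x : E3) :
    f x = x 0 • f e1 + x 1 • f e2 + x 2 • f e3 := by
  have hx : x = x 0 • e1 + (x 1 • e2 + (x 2 • e3 + 0)) := by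
    funext i; fin_cases i <;> simp [e1, e2, e3]
  calc f x = f (x 0 • e1 + (x 1 • e2 + (x 2 • e3 + 0))) := by rw [← hx]
    _ = x 0 • f e1 + (x 1 • f e2 + (x 2 • f e3 + f 0)) := by rw [hf, hf, hf]
    _ = x 0 • f e1 + x 1 • f e2 + x 2 • f e3 := by rw [lin_zero hf]; abel
lemma bil_add_left {φ : E3 → E3 → E3} (h : IsBil φ) (x x' y : E3) :
    φ (x + x') y = φ x y + φ x' y := by
  have := h.1 1 x x' y; simpa using this

lemma bil_add_right {φ : E3 → E3 → E3} (h : IsBil φ) (x y y' : E3) :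
    φ x (y + y') = φ x y + φ x y' := by
  have := h.2 1 x y y'; simpa using this

lemma bil_zero_left {φ : E3 → E3 → E3} (h : IsBil φ) (y : E3) : φ 0 y = 0 := by
  have := bil_add_left h 0 0 y; simpa using this.symm

lemma alt_swap {φ : E3 → E3 → E3} (hb : IsBil φ) (ha : IsAlt2 φ) (x y : E3) :
    φ y x = -φ x y := by
  have h := ha (x + y)
  rw [bil_add_left hb, bil_add_right hb, bil_add_right hb, ha x, ha y] at h
  have h2 : φ x y + φ y x = 0 := by
    rw [zero_add, add_zero] at h; exact h
  linear_combination (norm := abel_nf) h2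

lemma bil_alt_expand {φ : E3 → E3 → E3} (hb : IsBil φ) (ha : IsAlt2 φ) (x y : E3) :
    φ x y = (x 0 * y 1 - x 1 * y 0) • φ e1 e2 + (x 0 * y 2 - x 2 * y 0) • φ e1 e3 +
      (x 1 * y 2 - x 2 * y 1) • φ e2 e3 := by
  have hx : ∀ z : E3, z = z 0 • e1 + (z 1 • e2 + (z 2 • e3 + 0)) := by
    intro z; funext i; fin_cases i <;> simp [e1, e2, e3]
  have h1 : φ x y = x 0 • φ e1 y + (x 1 • φ e2 y + (x 2 • φ e3 y + φ 0 y)) := by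
    conv_lhs => rw [hx x]
    rw [hb.1, hb.1, hb.1]
  have h2 : ∀ u : E3, φ u y = y 0 • φ u e1 + (y 1 • φ u e2 + (y 2 • φ u e3 + φ u 0)) := by
    intro u
    conv_lhs => rw [hx y]
    rw [hb.2, hb.2, hb.2]
  have hz : ∀ u : E3, φ u 0 = 0 := by
    intro u
    have := bil_add_right hb u 0 0; simpa using this.symm
  rw [h1, h2 e1, h2 e2, h2 e3, bil_zero_left hb, hz, hz, hz,
    ha e1, ha e2, ha e3, alt_swap hb ha e1 e2, alt_swap hb ha e1 e3, alt_swap hb ha e2 e3]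
  module
section Tril
variable {ψ : E3 → E3 → E3 → E3}

lemma tri_add1 (ht : IsTril ψ) (u v w z : E3) :
    ψ (u + v) w z = ψ u w z + ψ v w z := by have := ht.1 1 u v w z; simpa using this

lemma tri_add2 (ht : IsTril ψ) (u v w z : E3) :
    ψ u (v + w) z = ψ u v z + ψ u w z := by have := ht.2.1 1 u v w z; simpa using this

lemma tri_add3 (ht : IsTril ψ) (u v w z : E3) :
    ψ u v (w + z) = ψ u v w + ψ u v z := by have := ht.2.2 1 u v w z; simpa using this

lemma tri_zero1 (ht : IsTril ψ) (w z : E3) : ψ 0 w z = 0 := by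
  have := tri_add1 ht 0 0 w z; simpa using this.symm

lemma tri_zero2 (ht : IsTril ψ) (w z : E3) : ψ w 0 z = 0 := by
  have := tri_add2 ht w 0 0 z; simpa using this.symm

lemma tri_zero3 (ht : IsTril ψ) (w z : E3) : ψ w z 0 = 0 := by
  have := tri_add3 ht w z 0 0; simpa using this.symm

lemma tri_swap12 (ht : IsTril ψ) (ha : IsAlt3 ψ) (x y z : E3) :
    ψ y x z = -ψ x y z := by
  have h := (ha (x + y) z).1
  rw [tri_add1 ht, tri_add2 ht, tri_add2 ht, (ha x z).1, (ha y z).1] at h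
  linear_combination (norm := abel_nf) h

lemma tri_swap23 (ht : IsTril ψ) (ha : IsAlt3 ψ) (x y z : E3) :
    ψ x z y = -ψ x y z := by
  have h := (ha x (y + z)).2.1
  rw [tri_add2 ht, tri_add3 ht, tri_add3 ht, (ha x y).2.1, (ha x z).2.1] at h
  linear_combination (norm := abel_nf) h

lemma tri_swap13 (ht : IsTril ψ) (ha : IsAlt3 ψ) (x y z : E3) :
    ψ z y x = -ψ x y z := by
  have h := (ha (x + z) y).2.2
  rw [tri_add1 ht, tri_add3 ht, tri_add3 ht, (ha x y).2.2, (ha z y).2.2] at h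
  linear_combination (norm := abel_nf) h

lemma tril_alt_expand (ht : IsTril ψ) (ha : IsAlt3 ψ) (x y z : E3) :
    ψ x y z = (x 0 * (y 1 * z 2 - y 2 * z 1) - x 1 * (y 0 * z 2 - y 2 * z 0)
      + x 2 * (y 0 * z 1 - y 1 * z 0)) • ψ e1 e2 e3 := by
  have hx : ∀ u : E3, u = u 0 • e1 + (u 1 • e2 + (u 2 • e3 + 0)) := by
    intro u; funext i; fin_cases i <;> simp [e1, e2, e3]
  have h1 : ψ x y z = x 0 • ψ e1 y z + (x 1 • ψ e2 y z + (x 2 • ψ e3 y z + 0)) := by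
    conv_lhs => rw [hx x]
    rw [ht.1, ht.1, ht.1, tri_zero1 ht]
  have h2 : ∀ u : E3, ψ u y z = y 0 • ψ u e1 z + (y 1 • ψ u e2 z + (y 2 • ψ u e3 z + 0)) := by
    intro u
    conv_lhs => rw [hx y]
    rw [ht.2.1, ht.2.1, ht.2.1, tri_zero2 ht]
  have h3 : ∀ u v : E3, ψ u v z = z 0 • ψ u v e1 + (z 1 • ψ u v e2 + (z 2 • ψ u v e3 + 0)) := by
    intro u v
    conv_lhs => rw [hx z]
    rw [ht.2.2, ht.2.2, ht.2.2, tri_zero3 ht]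
  rw [h1]
  simp only [h2]
  simp only [h3]
  rw [(ha e1 e1).2.2, (ha e2 e2).2.2, (ha e3 e3).2.2,
    (ha e1 e2).2.1, (ha e1 e3).2.1, (ha e2 e1).2.1, (ha e2 e3).2.1,
    (ha e3 e1).2.1, (ha e3 e2).2.1,
    (ha e1 e2).1, (ha e1 e3).1, (ha e2 e1).1, (ha e2 e3).1, (ha e3 e1).1, (ha e3 e2).1,
    (ha e1 e2).2.2, (ha e1 e3).2.2, (ha e2 e1).2.2, (ha e2 e3).2.2,
    (ha e3 e1).2.2, (ha e3 e2).2.2,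
    tri_swap23 ht ha e1 e2 e3, tri_swap12 ht ha e1 e2 e3, tri_swap13 ht ha e1 e2 e3]
  have h231 : ψ e2 e3 e1 = ψ e1 e2 e3 := by
    rw [tri_swap13 ht ha e1 e3 e2, tri_swap23 ht ha e1 e2 e3]; ring_nf
  have h312 : ψ e3 e1 e2 = ψ e1 e2 e3 := by
    rw [tri_swap12 ht ha e1 e3 e2, tri_swap23 ht ha e1 e2 e3]; ring_nf
  rw [h231, h312]
  module
end Tril
/-- maps that are linear with zero third coordinate -/
def S1 : Submodule ℂ (E3 → E3) where
  carrier := {f | IsLin f ∧ ∀ x, f x 2 = 0}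
  add_mem' := by
    rintro f g ⟨hf, hf2⟩ ⟨hg, hg2⟩
    refine ⟨fun a x y => ?_, fun x => ?_⟩
    · simp only [Pi.add_apply, hf a x y, hg a x y]
      funext i; simp [Pi.add_apply]; ring
    · simp [Pi.add_apply, hf2 x, hg2 x]
  zero_mem' := by
    refine ⟨fun a x y => ?_, fun x => ?_⟩ <;> simp
  smul_mem' := by
    rintro c f ⟨hf, hf2⟩
    refine ⟨fun a x y => ?_, fun x => ?_⟩
    · simp only [Pi.smul_apply, hf a x y]
      funext i; simp [Pi.smul_apply]; ring
    · simp [Pi.smul_apply, hf2 x]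

lemma isDeriv_iff (f : E3 → E3) : IsDeriv b0 f ↔ (IsLin f ∧ ∀ x, f x 2 = 0) := by
  constructor
  · rintro ⟨hlin, hder⟩
    refine ⟨hlin, ?_⟩
    have h13 := hder e1 e3
    have h23 := hder e2 e3
    have hb13 : b0 e1 e3 = e1 := by funext i; fin_cases i <;> simp [b_apply, e1, e3]
    have hb23 : b0 e2 e3 = e2 := by funext i; fin_cases i <;> simp [b_apply, e2, e3]
    rw [hb13] at h13
    rw [hb23] at h23
    have hfe1 : f e1 2 = 0 := by
      have := congrFun h13 2
      simpa [b_apply] using this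
    have hfe2 : f e2 2 = 0 := by
      have := congrFun h23 2
      simpa [b_apply] using this
    have hfe3 : f e3 2 = 0 := by
      have := congrFun h13 0
      simpa [b_apply, e1, e3, Pi.add_apply] using this
    intro x
    rw [lin_expand hlin x]
    simp [Pi.add_apply, hfe1, hfe2, hfe3]
  · rintro ⟨hlin, h2⟩
    refine ⟨hlin, fun x y => ?_⟩
    have hA := h2 e1; have hB := h2 e2; have hC := h2 e3
    rw [lin_expand hlin x, lin_expand hlin y, lin_expand hlin (b0 x y)]
    funext i
    fin_cases i <;>
      simp [b_apply, Pi.add_apply, Pi.smul_apply, smul_eq_mul, hA, hB, hC] <;> ring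
lemma derSpace_eq : DerSpace b0 = S1 := by
  have hset : {f : E3 → E3 | IsDeriv b0 f} = (S1 : Set (E3 → E3)) := by
    ext f; exact isDeriv_iff f
  rw [DerSpace, hset, Submodule.span_eq]

def mkLin (M : Fin 2 → Fin 3 → ℂ) : E3 → E3 := fun x =>
  ![M 0 0 * x 0 + M 0 1 * x 1 + M 0 2 * x 2,
    M 1 0 * x 0 + M 1 1 * x 1 + M 1 2 * x 2, 0]

lemma mkLin_mem (M : Fin 2 → Fin 3 → ℂ) : mkLin M ∈ S1 := by
  refine ⟨fun a x y => ?_, fun x => ?_⟩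
  · funext i; fin_cases i <;> simp [mkLin, Pi.add_apply, Pi.smul_apply, smul_eq_mul] <;> ring
  · simp [mkLin]

def derMap : (Fin 2 → Fin 3 → ℂ) →ₗ[ℂ] S1 where
  toFun M := ⟨mkLin M, mkLin_mem M⟩
  map_add' M N := by
    apply Subtype.ext
    funext x i; fin_cases i <;> simp [mkLin, Pi.add_apply] <;> ring
  map_smul' c M := by
    apply Subtype.ext
    funext x i; fin_cases i <;> simp [mkLin, Pi.smul_apply, smul_eq_mul] <;> ring

lemma derMap_bij : Function.Bijective derMap := by
  constructor
  · intro M N h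
    have h' : mkLin M = mkLin N := congrArg Subtype.val h
    funext i j
    have h1 := congrFun (congrFun h' (if j = 0 then e1 else if j = 1 then e2 else e3)) i.castSucc
    fin_cases i <;> fin_cases j <;>
      simpa [mkLin, e1, e2, e3] using h1
  · rintro ⟨f, hlin, h2⟩
    refine ⟨![![f e1 0, f e2 0, f e3 0], ![f e1 1, f e2 1, f e3 1]], ?_⟩
    apply Subtype.ext
    show mkLin _ = f
    funext x
    rw [lin_expand hlin x]
    funext i
    fin_cases i <;>
      simp [mkLin, Pi.add_apply, Pi.smul_apply, smul_eq_mul, h2 e1, h2 e2, h2 e3] <;> ring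

lemma finrank_S1 : Module.finrank ℂ S1 = 6 := by
  have e := LinearEquiv.ofBijective derMap derMap_bij
  rw [← e.finrank_eq]
  rw [Module.finrank_pi_fintype]
  simp [Module.finrank_fintype_fun_eq_card]
lemma b_add_right (x u v : E3) : b0 x (u + v) = b0 x u + b0 x v := by
  funext i; fin_cases i <;> simp [b_apply, Pi.add_apply] <;> ring

lemma b_smul_right (c : ℂ) (x u : E3) : b0 x (c • u) = c • b0 x u := by
  funext i; fin_cases i <;> simp [b_apply, Pi.smul_apply, smul_eq_mul] <;> ring

lemma b_zero_right (x : E3) : b0 x 0 = 0 := by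
  funext i; fin_cases i <;> simp [b_apply]

lemma cb2_add (φ φ' : E3 → E3 → E3) : cb2 b0 (φ + φ') = cb2 b0 φ + cb2 b0 φ' := by
  funext x y z
  simp only [cb2, Pi.add_apply, b_add_right]
  abel

lemma cb2_smul (c : ℂ) (φ : E3 → E3 → E3) : cb2 b0 (c • φ) = c • cb2 b0 φ := by
  funext x y z
  simp only [cb2, Pi.smul_apply, b_smul_right, smul_sub, smul_add]

lemma cb2_zero : cb2 b0 (0 : E3 → E3 → E3) = 0 := by
  funext x y z
  simp [cb2, b_zero_right]

/-- the 2-cocycles, as an honest submodule -/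
def S2 : Submodule ℂ (E3 → E3 → E3) where
  carrier := {φ | IsBil φ ∧ IsAlt2 φ ∧ cb2 b0 φ = 0}
  add_mem' := by
    rintro φ φ' ⟨hb, ha, hc⟩ ⟨hb', ha', hc'⟩
    refine ⟨⟨fun a x x' y => ?_, fun a x y y' => ?_⟩, fun x => ?_, ?_⟩
    · simp only [Pi.add_apply, hb.1 a x x' y, hb'.1 a x x' y]; module
    · simp only [Pi.add_apply, hb.2 a x y y', hb'.2 a x y y']; module
    · simp [Pi.add_apply, ha x, ha' x]
    · rw [cb2_add, hc, hc']; simp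
  zero_mem' := by
    refine ⟨⟨fun a x x' y => ?_, fun a x y y' => ?_⟩, fun x => rfl, cb2_zero⟩ <;> simp
  smul_mem' := by
    rintro c φ ⟨hb, ha, hc⟩
    refine ⟨⟨fun a x x' y => ?_, fun a x y y' => ?_⟩, fun x => ?_, ?_⟩
    · simp only [Pi.smul_apply, hb.1 a x x' y]; module
    · simp only [Pi.smul_apply, hb.2 a x y y']; module
    · simp [Pi.smul_apply, ha x]
    · rw [cb2_smul, hc]; simp

lemma Z2_eq : Z2 b0 = S2 := by
  have hset : {φ : E3 → E3 → E3 | IsBil φ ∧ IsAlt2 φ ∧ cb2 b0 φ = 0} =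
      (S2 : Set (E3 → E3 → E3)) := rfl
  rw [Z2, hset, Submodule.span_eq]
lemma hb12 : b0 e1 e2 = 0 := by funext i; fin_cases i <;> simp [b_apply, e1, e2]
lemma hb13 : b0 e1 e3 = e1 := by funext i; fin_cases i <;> simp [b_apply, e1, e3]
lemma hb23 : b0 e2 e3 = e2 := by funext i; fin_cases i <;> simp [b_apply, e2, e3]

lemma b_e1 (w : E3) : b0 e1 w = ![w 2, 0, 0] := by
  funext i; fin_cases i <;> simp [b_apply, e1]
lemma b_e2 (w : E3) : b0 e2 w = ![0, w 2, 0] := by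
  funext i; fin_cases i <;> simp [b_apply, e2]
lemma b_e3 (w : E3) : b0 e3 w = ![-(w 0), -(w 1), 0] := by
  funext i; fin_cases i <;> simp [b_apply, e3]

lemma cocycle_e12 (φ : E3 → E3 → E3) (hb : IsBil φ) (ha : IsAlt2 φ) (hc : cb2 b0 φ = 0) :
    φ e1 e2 0 = -(φ e2 e3 2) ∧ φ e1 e2 1 = φ e1 e3 2 ∧ φ e1 e2 2 = 0 := by
  have h := congrFun (congrFun (congrFun hc e1) e2) e3
  rw [show cb2 b0 φ e1 e2 e3 = b0 e1 (φ e2 e3) - b0 e2 (φ e1 e3) + b0 e3 (φ e1 e2)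
      - φ (b0 e1 e2) e3 + φ (b0 e1 e3) e2 - φ (b0 e2 e3) e1 from rfl,
    hb12, hb13, hb23, bil_zero_left hb, alt_swap hb ha e1 e2,
    b_e1, b_e2, b_e3] at h
  have h0 := congrFun h 0
  have h1 := congrFun h 1
  have h2 := congrFun h 2
  simp [Matrix.vecHead, Matrix.vecTail, Function.comp,
    Fin.succ_zero_eq_one, Fin.succ_one_eq_two] at h0 h1 h2
  refine ⟨by linear_combination h0, by linear_combination h1, h2⟩
def mkC (M : Fin 2 → Fin 3 → ℂ) : E3 → E3 → E3 := fun x y =>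
  ![(x 0 * y 1 - x 1 * y 0) * (-(M 1 2)) + (x 0 * y 2 - x 2 * y 0) * M 0 0
      + (x 1 * y 2 - x 2 * y 1) * M 1 0,
    (x 0 * y 1 - x 1 * y 0) * M 0 2 + (x 0 * y 2 - x 2 * y 0) * M 0 1
      + (x 1 * y 2 - x 2 * y 1) * M 1 1,
    (x 0 * y 2 - x 2 * y 0) * M 0 2 + (x 1 * y 2 - x 2 * y 1) * M 1 2]

lemma mkC_mem (M : Fin 2 → Fin 3 → ℂ) : mkC M ∈ S2 := by
  refine ⟨⟨fun a x x' y => ?_, fun a x y y' => ?_⟩, fun x => ?_, ?_⟩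
  · funext i; fin_cases i <;>
      simp [mkC, Pi.add_apply, Pi.smul_apply, smul_eq_mul] <;> ring
  · funext i; fin_cases i <;>
      simp [mkC, Pi.add_apply, Pi.smul_apply, smul_eq_mul] <;> ring
  · funext i; fin_cases i <;> simp [mkC] <;> ring
  · funext x y z
    funext i
    fin_cases i <;>
      simp [cb2, mkC, b_apply, Pi.add_apply, Pi.sub_apply] <;> ring

def cocMap : (Fin 2 → Fin 3 → ℂ) →ₗ[ℂ] S2 where
  toFun M := ⟨mkC M, mkC_mem M⟩
  map_add' M N := by
    apply Subtype.ext
    funext x y i; fin_cases i <;> simp [mkC, Pi.add_apply] <;> ring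
  map_smul' c M := by
    apply Subtype.ext
    funext x y i; fin_cases i <;> simp [mkC, Pi.smul_apply, smul_eq_mul] <;> ring

lemma cocMap_bij : Function.Bijective cocMap := by
  constructor
  · intro M N h
    have h' : mkC M = mkC N := congrArg Subtype.val h
    funext i j
    have h1 := congrFun (congrFun (congrFun h' (if i = 0 then e1 else e2)) e3) j
    fin_cases i <;> fin_cases j <;>
      simpa [mkC, e1, e2, e3] using h1
  · rintro ⟨φ, hb, ha, hc⟩
    obtain ⟨k0, k1, k2⟩ := cocycle_e12 φ hb ha hc
    refine ⟨![![φ e1 e3 0, φ e1 e3 1, φ e1 e3 2], ![φ e2 e3 0, φ e2 e3 1, φ e2 e3 2]], ?_⟩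
    apply Subtype.ext
    show mkC _ = φ
    funext x y
    rw [bil_alt_expand hb ha x y]
    funext i
    fin_cases i <;>
      simp [mkC, Pi.add_apply, Pi.smul_apply, smul_eq_mul, k0, k1, k2] <;> ring

lemma finrank_S2 : Module.finrank ℂ S2 = 6 := by
  have e := LinearEquiv.ofBijective cocMap cocMap_bij
  rw [← e.finrank_eq, Module.finrank_pi_fintype]
  simp [Module.finrank_fintype_fun_eq_card]
def mkB (v : Fin 3 → ℂ) : E3 → E3 → E3 := fun x y =>
  ![(x 0 * y 1 - x 1 * y 0) * v 1 + (x 0 * y 2 - x 2 * y 0) * v 2,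
    (x 0 * y 1 - x 1 * y 0) * (-(v 0)) + (x 1 * y 2 - x 2 * y 1) * v 2,
    (x 0 * y 2 - x 2 * y 0) * (-(v 0)) + (x 1 * y 2 - x 2 * y 1) * (-(v 1))]

lemma mkB_eq_mkC (v : Fin 3 → ℂ) :
    mkB v = mkC ![![v 2, 0, -(v 0)], ![0, v 2, -(v 1)]] := by
  funext x y i
  fin_cases i <;> simp [mkB, mkC] <;> ring

lemma mkB_mem_S2 (v : Fin 3 → ℂ) : mkB v ∈ S2 := by
  rw [mkB_eq_mkC]; exact mkC_mem _

lemma cb1_eq (f : E3 → E3) (hf : IsLin f) :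
    cb1 b0 f = mkB ![f e1 2, f e2 2, f e3 2] := by
  funext x y
  rw [show cb1 b0 f x y = b0 x (f y) - b0 y (f x) - f (b0 x y) from rfl,
    lin_expand hf x, lin_expand hf y, lin_expand hf (b0 x y)]
  funext i
  fin_cases i <;>
    simp [b_apply, mkB, Pi.add_apply, Pi.sub_apply, Pi.smul_apply, smul_eq_mul] <;> ring

lemma isLin_add {f g : E3 → E3} (hf : IsLin f) (hg : IsLin g) : IsLin (f + g) := by
  intro a x y
  simp only [Pi.add_apply, hf a x y, hg a x y]
  funext i; simp [Pi.add_apply]; ring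

lemma isLin_smul (c : ℂ) {f : E3 → E3} (hf : IsLin f) : IsLin (c • f) := by
  intro a x y
  simp only [Pi.smul_apply, hf a x y]
  funext i; simp [Pi.smul_apply]; ring

lemma cb1_add (f g : E3 → E3) : cb1 b0 (f + g) = cb1 b0 f + cb1 b0 g := by
  funext x y
  simp only [cb1, Pi.add_apply, b_add_right]
  abel

lemma cb1_smul (c : ℂ) (f : E3 → E3) : cb1 b0 (c • f) = c • cb1 b0 f := by
  funext x y
  simp only [cb1, Pi.smul_apply, b_smul_right, smul_sub]

/-- the 2-coboundaries, as an honest submodule -/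
def S3 : Submodule ℂ (E3 → E3 → E3) where
  carrier := {φ | ∃ f, IsLin f ∧ φ = cb1 b0 f}
  add_mem' := by
    rintro φ φ' ⟨f, hf, rfl⟩ ⟨g, hg, rfl⟩
    exact ⟨f + g, isLin_add hf hg, (cb1_add f g).symm⟩
  zero_mem' := by
    refine ⟨0, fun a x y => by simp, ?_⟩
    funext x y
    simp [cb1, b_zero_right]
  smul_mem' := by
    rintro c φ ⟨f, hf, rfl⟩
    exact ⟨c • f, isLin_smul c hf, (cb1_smul c f).symm⟩

lemma B2_eq : B2 b0 = S3 := by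
  have hset : {φ : E3 → E3 → E3 | ∃ f, IsLin f ∧ φ = cb1 b0 f} =
      (S3 : Set (E3 → E3 → E3)) := rfl
  rw [B2, hset, Submodule.span_eq]

lemma S3_le_S2 : S3 ≤ S2 := by
  rintro φ ⟨f, hf, rfl⟩
  rw [cb1_eq f hf]
  exact mkB_mem_S2 _

lemma mkB_mem_S3 (v : Fin 3 → ℂ) : mkB v ∈ S3 := by
  refine ⟨fun x => ![0, 0, v 0 * x 0 + v 1 * x 1 + v 2 * x 2], fun a x y => ?_, ?_⟩
  · funext i; fin_cases i <;> simp [Pi.add_apply, Pi.smul_apply, smul_eq_mul] <;> ring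
  · have hv : (![(fun x : E3 => (![0, 0, v 0 * x 0 + v 1 * x 1 + v 2 * x 2] : E3)) e1 2,
        (fun x : E3 => (![0, 0, v 0 * x 0 + v 1 * x 1 + v 2 * x 2] : E3)) e2 2,
        (fun x : E3 => (![0, 0, v 0 * x 0 + v 1 * x 1 + v 2 * x 2] : E3)) e3 2] : Fin 3 → ℂ) = v := by
      funext j
      fin_cases j <;> simp [e1, e2, e3]
    rw [cb1_eq _ (by intro a x y; funext i; fin_cases i <;>
      simp [Pi.add_apply, Pi.smul_apply, smul_eq_mul] <;> ring), hv]

def bMap : (Fin 3 → ℂ) →ₗ[ℂ] S3 where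
  toFun v := ⟨mkB v, mkB_mem_S3 v⟩
  map_add' v w := by
    apply Subtype.ext
    funext x y i; fin_cases i <;> simp [mkB, Pi.add_apply] <;> ring
  map_smul' c v := by
    apply Subtype.ext
    funext x y i; fin_cases i <;> simp [mkB, Pi.smul_apply, smul_eq_mul] <;> ring

lemma bMap_bij : Function.Bijective bMap := by
  constructor
  · intro v w h
    have h' : mkB v = mkB w := congrArg Subtype.val h
    funext j
    have h12 := congrFun (congrFun (congrFun h' e1) e2)
    have h13 := congrFun (congrFun (congrFun h' e1) e3)
    fin_cases j
    · have := h12 1; simp [mkB, e1, e2] at this; exact this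
    · have := h12 0; simpa [mkB, e1, e2] using this
    · have := h13 0; simpa [mkB, e1, e3] using this
  · rintro ⟨φ, f, hf, rfl⟩
    exact ⟨![f e1 2, f e2 2, f e3 2], Subtype.ext (cb1_eq f hf).symm⟩

lemma finrank_S3 : Module.finrank ℂ S3 = 3 := by
  have e := LinearEquiv.ofBijective bMap bMap_bij
  rw [← e.finrank_eq]
  simp [Module.finrank_fintype_fun_eq_card]
def mkD (v : E3) : E3 → E3 → E3 := fun x y =>
  (x 0 * y 1 - x 1 * y 0) • (![v 0, v 1, v 2 / 2] : E3)

lemma mkD_bil (v : E3) : IsBil (mkD v) := by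
  constructor <;> intro a x y z <;> funext i <;> fin_cases i <;>
    simp [mkD, Pi.add_apply, Pi.smul_apply, smul_eq_mul] <;> ring

lemma mkD_alt (v : E3) : IsAlt2 (mkD v) := by
  intro x; funext i; fin_cases i <;> simp [mkD, smul_eq_mul] <;> left <;> ring

lemma cb2_mkD (v : E3) : cb2 b0 (mkD v) = fun x y z =>
    (x 0 * (y 1 * z 2 - y 2 * z 1) - x 1 * (y 0 * z 2 - y 2 * z 0)
      + x 2 * (y 0 * z 1 - y 1 * z 0)) • v := by
  funext x y z i
  fin_cases i <;>
    simp [cb2, mkD, b_apply, Pi.add_apply, Pi.sub_apply, smul_eq_mul] <;> ring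

lemma C3_le_B3 : C3 ≤ B3 b0 := by
  rw [C3]
  apply Submodule.span_le.2
  rintro ψ ⟨ht, ha⟩
  apply Submodule.subset_span
  refine ⟨mkD (ψ e1 e2 e3), mkD_bil _, mkD_alt _, ?_⟩
  funext x y z
  rw [tril_alt_expand ht ha x y z, cb2_mkD]

lemma H3_eq : H3dim b0 = 0 := by
  have htop : (B3 b0).comap C3.subtype = ⊤ := by
    rw [Submodule.eq_top_iff']
    intro x
    exact C3_le_B3 x.2
  rw [H3dim]
  have : Subsingleton (C3 ⧸ (B3 b0).comap C3.subtype) :=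
    Submodule.Quotient.subsingleton_iff.2 htop
  exact Module.finrank_zero_of_subsingleton
lemma finrank_quot_congr {M : Type} [AddCommGroup M] [Module ℂ M]
    {P P' Q Q' : Submodule ℂ M} (hP : P = P') (hQ : Q = Q') :
    Module.finrank ℂ (P ⧸ Q.comap P.subtype) =
      Module.finrank ℂ (P' ⧸ Q'.comap P'.subtype) := by
  subst hP; subst hQ; rfl

set_option synthInstance.maxHeartbeats 1000000 in
set_option maxHeartbeats 1000000 in
lemma H2_eq : H2dim b0 = 3 := by
  rw [H2dim, finrank_quot_congr Z2_eq B2_eq]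
  have fd : FiniteDimensional ℂ S2 :=
    Module.Finite.equiv (LinearEquiv.ofBijective cocMap cocMap_bij)
  have h := Submodule.finrank_quotient_add_finrank (S3.comap S2.subtype)
  have hc : Module.finrank ℂ (S3.comap S2.subtype) = 3 := by
    rw [(Submodule.comapSubtypeEquivOfLe S3_le_S2).finrank_eq, finrank_S3]
  rw [hc, finrank_S2] at h
  omega

end RoneAux

/-- For the Lie algebra `r₁` with `[e₁,e₃]=e₁`, `[e₂,e₃]=e₂`: the space of derivations
has dimension 6, `H²(r₁;r₁)` has dimension 3, and `H³(r₁;r₁) = 0`. -/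
theorem r_one_cohomology :
    Module.finrank ℂ (DerSpace (br 0 e1 e2)) = 6 ∧
    H2dim (br 0 e1 e2) = 3 ∧
    H3dim (br 0 e1 e2) = 0 := by
  refine ⟨?_, RoneAux.H2_eq, RoneAux.H3_eq⟩
  rw [RoneAux.derSpace_eq]
  exact RoneAux.finrank_S1
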